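/- (Two-sided deviation from the mean for bounded random variables.) Let (Ω, P) be a probability space and let X : Ω → ℝ be a measurable random variable with 0 ≤ X ≤ 1 almost surely. Let 0 < ε ≤ 1 and suppose P(|X − E[X]| ≥ ε) ≥ ε. Then P(X − E[X] ≥ ε²/4) ≥ ε²/4 and P(E[X] − X ≥ ε²/4) ≥ ε²/4. -/

import Mathlib

open MeasureTheory

/-- Markov lower bound: `ε * P {ε ≤ g} ≤ ∫ g` for nonneg integrable `g`. -/
lemma aux_lower {Ω : Type*} [MeasurableSpace Ω] (P : Measure Ω) [IsProbabilityMeasure P]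
    (g : Ω → ℝ) (hg : Measurable g) (hgint : Integrable g P)
    (hg0 : ∀ ω, 0 ≤ g ω) (ε : ℝ) (hε : 0 ≤ ε) :
    ε * (P {ω | ε ≤ g ω}).toReal ≤ ∫ ω, g ω ∂P := by
  set S := {ω | ε ≤ g ω} with hSdef
  have hS : MeasurableSet S := measurableSet_le measurable_const hg
  calc ε * (P S).toReal = ∫ _ω in S, ε ∂P := by
        rw [setIntegral_const, smul_eq_mul, mul_comm]; rfl
    _ ≤ ∫ ω in S, g ω ∂P := by
        apply setIntegral_mono_on (integrableOn_const (measure_ne_top P S))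
          hgint.integrableOn hS
        intro ω hω; exact hω
    _ ≤ ∫ ω, g ω ∂P := setIntegral_le_integral hgint (Filter.Eventually.of_forall hg0)

/-- Reverse Markov: if `0 ≤ g ≤ 1` a.e., then `∫ g - c ≤ P {c ≤ g}`. -/
lemma aux_upper {Ω : Type*} [MeasurableSpace Ω] (P : Measure Ω) [IsProbabilityMeasure P]
    (g : Ω → ℝ) (hg : Measurable g) (hgint : Integrable g P)
    (hg1 : ∀ᵐ ω ∂P, g ω ≤ 1) (c : ℝ) (hc : 0 ≤ c) :
    (∫ ω, g ω ∂P) - c ≤ (P {ω | c ≤ g ω}).toReal := by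
  set S := {ω | c ≤ g ω} with hSdef
  have hS : MeasurableSet S := measurableSet_le measurable_const hg
  have h1 : ∫ ω in S, g ω ∂P ≤ (P S).toReal := by
    calc ∫ ω in S, g ω ∂P ≤ ∫ _ω in S, (1 : ℝ) ∂P := by
          apply setIntegral_mono_ae hgint.integrableOn
            (integrableOn_const (measure_ne_top P S)) hg1
      _ = (P S).toReal := by rw [setIntegral_const, smul_eq_mul, mul_one]; rfl
  have h2 : ∫ ω in Sᶜ, g ω ∂P ≤ c := by
    have hle : ∀ ω ∈ Sᶜ, g ω ≤ c := fun ω hω => le_of_not_ge hω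
    calc ∫ ω in Sᶜ, g ω ∂P ≤ ∫ _ω in Sᶜ, c ∂P := by
          apply setIntegral_mono_on hgint.integrableOn
            (integrableOn_const (measure_ne_top P Sᶜ)) hS.compl hle
      _ = (P Sᶜ).toReal * c := by rw [setIntegral_const, smul_eq_mul]; rfl
      _ ≤ 1 * c := by
          apply mul_le_mul_of_nonneg_right _ hc
          have := prob_le_one (μ := P) (s := Sᶜ)
          simpa using ENNReal.toReal_mono (by simp) this
      _ = c := one_mul c
  have := integral_add_compl hS hgint
  linarith

/-- two-sided deviation from the mean for [0,1]-valued random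
variables. -/
theorem two_sided_deviation
    {Ω : Type*} [MeasurableSpace Ω] (P : Measure Ω) [IsProbabilityMeasure P]
    (X : Ω → ℝ) (hX : Measurable X)
    (hbdd : ∀ᵐ ω ∂P, 0 ≤ X ω ∧ X ω ≤ 1)
    (ε : ℝ) (hε0 : 0 < ε) (hε1 : ε ≤ 1)
    (hdev : ENNReal.ofReal ε ≤ P {ω | ε ≤ |X ω - ∫ ω', X ω' ∂P|}) :
    ENNReal.ofReal (ε ^ 2 / 4) ≤ P {ω | ε ^ 2 / 4 ≤ X ω - ∫ ω', X ω' ∂P} ∧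
    ENNReal.ofReal (ε ^ 2 / 4) ≤ P {ω | ε ^ 2 / 4 ≤ (∫ ω', X ω' ∂P) - X ω} := by
  have hXint : Integrable X P := by
    apply Integrable.mono' (integrable_const (1 : ℝ)) hX.aestronglyMeasurable
    filter_upwards [hbdd] with ω ⟨h0, h1⟩
    rw [Real.norm_eq_abs, abs_of_nonneg h0]; exact h1
  set m : ℝ := ∫ ω', X ω' ∂P with hm
  have hm0 : 0 ≤ m := integral_nonneg_of_ae (by filter_upwards [hbdd] with ω h; exact h.1)
  have hm1 : m ≤ 1 := by
    calc m ≤ ∫ _ω, (1 : ℝ) ∂P := by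
          apply integral_mono_ae hXint (integrable_const 1)
          filter_upwards [hbdd] with ω h; exact h.2
      _ = 1 := by simp
  set Yp : Ω → ℝ := fun ω => max (X ω - m) 0 with hYp
  set Ym : Ω → ℝ := fun ω => max (m - X ω) 0 with hYm
  have hYpm : ∀ ω, Yp ω - Ym ω = X ω - m := by
    intro ω
    rcases le_total (X ω) m with h | h
    · simp [hYp, hYm, max_eq_right (sub_nonpos.2 h), max_eq_left (sub_nonneg.2 h)]
    · simp [hYp, hYm, max_eq_left (sub_nonneg.2 h), max_eq_right (sub_nonpos.2 h)]
  have hYpmeas : Measurable Yp := (hX.sub measurable_const).max measurable_const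
  have hYmmeas : Measurable Ym := (measurable_const.sub hX).max measurable_const
  have hYpint : Integrable Yp P := (hXint.sub (integrable_const m)).pos_part
  have hYmint : Integrable Ym P := ((integrable_const m).sub hXint).pos_part
  have hYp1 : ∀ᵐ ω ∂P, Yp ω ≤ 1 := by
    filter_upwards [hbdd] with ω ⟨h0, h1⟩
    simp only [hYp, max_le_iff]
    constructor <;> linarith
  have hYm1 : ∀ᵐ ω ∂P, Ym ω ≤ 1 := by
    filter_upwards [hbdd] with ω ⟨h0, h1⟩
    simp only [hYm, max_le_iff]
    constructor <;> linarith
  -- E[Yp] = E[Ym]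
  have hEeq : ∫ ω, Yp ω ∂P = ∫ ω, Ym ω ∂P := by
    have h1 : ∫ ω, (Yp ω - Ym ω) ∂P = ∫ ω, Yp ω ∂P - ∫ ω, Ym ω ∂P :=
      integral_sub hYpint hYmint
    have h2 : ∫ ω, (Yp ω - Ym ω) ∂P = 0 := by
      have : ∫ ω, (Yp ω - Ym ω) ∂P = ∫ ω, (X ω - m) ∂P := by
        congr 1; ext ω; exact hYpm ω
      rw [this, integral_sub hXint (integrable_const m)]
      simp [hm]
    linarith
  -- tail probability sum
  have habs : ε ≤ (P {ω | ε ≤ Yp ω}).toReal + (P {ω | ε ≤ Ym ω}).toReal := by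
    have hsub : {ω | ε ≤ |X ω - m|} ⊆ {ω | ε ≤ Yp ω} ∪ {ω | ε ≤ Ym ω} := by
      intro ω hω
      simp only [Set.mem_setOf_eq] at hω
      rcases le_total (X ω) m with h | h
      · right; simp only [Set.mem_setOf_eq, hYm, le_max_iff]; left
        rw [abs_of_nonpos (by linarith)] at hω; linarith
      · left; simp only [Set.mem_setOf_eq, hYp, le_max_iff]; left
        rw [abs_of_nonneg (by linarith)] at hω; linarith
    have h1 : ENNReal.ofReal ε ≤ P {ω | ε ≤ Yp ω} + P {ω | ε ≤ Ym ω} :=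
      le_trans hdev (le_trans (measure_mono hsub) (measure_union_le _ _))
    have h2 := ENNReal.toReal_mono (by finiteness) h1
    rw [ENNReal.toReal_ofReal hε0.le] at h2
    calc ε ≤ (P {ω | ε ≤ Yp ω} + P {ω | ε ≤ Ym ω}).toReal := h2
      _ = (P {ω | ε ≤ Yp ω}).toReal + (P {ω | ε ≤ Ym ω}).toReal :=
        ENNReal.toReal_add (by finiteness) (by finiteness)
  -- E[Yp] ≥ ε²/2
  have hlow1 := aux_lower P Yp hYpmeas hYpint (fun ω => le_max_right _ _) ε hε0.le
  have hlow2 := aux_lower P Ym hYmmeas hYmint (fun ω => le_max_right _ _) ε hε0.le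
  have hI : ε ^ 2 / 2 ≤ ∫ ω, Yp ω ∂P := by
    nlinarith [hlow1, hlow2, hEeq, habs]
  have hc0 : (0 : ℝ) ≤ ε ^ 2 / 4 := by positivity
  have hup1 := aux_upper P Yp hYpmeas hYpint hYp1 (ε ^ 2 / 4) hc0
  have hup2 := aux_upper P Ym hYmmeas hYmint hYm1 (ε ^ 2 / 4) hc0
  have hcpos : (0 : ℝ) < ε ^ 2 / 4 := by positivity
  have hseteq1 : {ω | ε ^ 2 / 4 ≤ Yp ω} = {ω | ε ^ 2 / 4 ≤ X ω - m} := by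
    ext ω; simp only [Set.mem_setOf_eq, hYp, le_max_iff]
    constructor
    · rintro (h | h)
      · exact h
      · linarith
    · exact Or.inl
  have hseteq2 : {ω | ε ^ 2 / 4 ≤ Ym ω} = {ω | ε ^ 2 / 4 ≤ m - X ω} := by
    ext ω; simp only [Set.mem_setOf_eq, hYm, le_max_iff]
    constructor
    · rintro (h | h)
      · exact h
      · linarith
    · exact Or.inl
  rw [hseteq1] at hup1
  rw [hseteq2] at hup2
  constructor
  · rw [ENNReal.ofReal_le_iff_le_toReal (by finiteness)]
    linarith
  · rw [ENNReal.ofReal_le_iff_le_toReal (by finiteness)]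
    rw [← hEeq] at hup2
    linarith
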